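/- Let m, n be positive natural numbers and X : Matrix (Fin m) (Fin n) ℝ. Set Σ = ((n : ℝ) • 1 + Xᵀ * X)⁻¹ (an n×n positive definite matrix), K = (n : ℝ)⁻¹ • (X * Xᵀ), and let λ_max ≥ 0 denote the largest eigenvalue of the positive semidefinite m×m matrix K. Then trace((n : ℝ)⁻¹ • 1 + Σ − (2/√n) • Σ^{1/2}) ≤ (m/n) · (1 − (1 + λ_max)^{-1/2})², where Σ^{1/2} denotes the positive semidefinite square root of Σ. -/

import Mathlib

open Matrix

/-- The positive semidefinite square root of a positive semidefinite matrix, as defined in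
the older Mathlib (`Matrix.PosSemidef.sqrt`, since removed in favour of `CFC.sqrt`). -/
noncomputable def Matrix.PosSemidef.sqrt {n : Type*} [Fintype n] [DecidableEq n]
    {A : Matrix n n ℝ} (hA : A.PosSemidef) : Matrix n n ℝ :=
  (hA.1.eigenvectorUnitary : Matrix n n ℝ) * diagonal ((↑) ∘ Real.sqrt ∘ hA.1.eigenvalues) *
    (star (hA.1.eigenvectorUnitary : Matrix n n ℝ))

section Aux

variable {ι : Type*} [Fintype ι] [DecidableEq ι]

private lemma aux_conj_mul (U M N : Matrix ι ι ℝ) (h : star U * U = 1) :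
    (U * M * star U) * (U * N * star U) = U * (M * N) * star U := by
  simp only [mul_assoc]
  rw [← mul_assoc (star U) U, h, one_mul]

private lemma aux_smul_one_conj (U : Matrix ι ι ℝ) (h : U * star U = 1) (c : ℝ) :
    U * (c • 1) * star U = c • (1 : Matrix ι ι ℝ) := by
  rw [mul_smul_comm, mul_one, smul_mul_assoc, h]

private lemma aux_sub_psd {M : Matrix ι ι ℝ} (hM : M.IsHermitian) (c : ℝ)
    (hc : ∀ i, hM.eigenvalues i ≤ c) :
    (c • (1 : Matrix ι ι ℝ) - M).PosSemidef := by
  have hUsU : (hM.eigenvectorUnitary : Matrix ι ι ℝ) *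
      star (hM.eigenvectorUnitary : Matrix ι ι ℝ) = 1 := hM.eigenvectorUnitary.2.2
  have hspec : M = (hM.eigenvectorUnitary : Matrix ι ι ℝ) * diagonal hM.eigenvalues *
      star (hM.eigenvectorUnitary : Matrix ι ι ℝ) := by
    simpa using hM.spectral_theorem
  have key : c • (1 : Matrix ι ι ℝ) - M =
      (hM.eigenvectorUnitary : Matrix ι ι ℝ) * diagonal (fun i => c - hM.eigenvalues i) *
        star (hM.eigenvectorUnitary : Matrix ι ι ℝ) := by
    have hd : diagonal (fun i => c - hM.eigenvalues i) =
        c • (1 : Matrix ι ι ℝ) - diagonal hM.eigenvalues := by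
      rw [smul_one_eq_diagonal, ← diagonal_sub]
    rw [hd, mul_sub, sub_mul, aux_smul_one_conj _ hUsU, ← hspec]
  rw [key, Matrix.star_eq_conjTranspose]
  exact (posSemidef_diagonal_iff.mpr fun i => sub_nonneg.2 (hc i)).mul_mul_conjTranspose_same _

end Aux

theorem wasserstein_trace_bound
    (m n : ℕ) (hm : 0 < m) (hn : 0 < n) (X : Matrix (Fin m) (Fin n) ℝ)
    (hS : (((n : ℝ) • (1 : Matrix (Fin n) (Fin n) ℝ) + Xᵀ * X)⁻¹).PosSemidef)
    (hK : ((n : ℝ)⁻¹ • (X * Xᵀ)).PosSemidef)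
    (lmax : ℝ) (hlmax0 : 0 ≤ lmax)
    (hlmax : IsGreatest (Set.range hK.1.eigenvalues) lmax) :
    Matrix.trace
        ((n : ℝ)⁻¹ • (1 : Matrix (Fin n) (Fin n) ℝ) +
          ((n : ℝ) • (1 : Matrix (Fin n) (Fin n) ℝ) + Xᵀ * X)⁻¹ -
          (2 / Real.sqrt n) • hS.sqrt) ≤
      ((m : ℝ) / n) * (1 - (Real.sqrt (1 + lmax))⁻¹) ^ 2 := by
  have npos : (0 : ℝ) < n := by exact_mod_cast hn
  have hA : (Xᵀ * X).PosSemidef := by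
    have := posSemidef_conjTranspose_mul_self X
    rwa [conjTranspose_eq_transpose_of_trivial] at this
  set U : Matrix (Fin n) (Fin n) ℝ := (hA.1.eigenvectorUnitary : Matrix (Fin n) (Fin n) ℝ)
    with hUdef
  set μ : Fin n → ℝ := hA.1.eigenvalues with hμdef
  have hsUU : star U * U = 1 := hA.1.eigenvectorUnitary.2.1
  have hUsU : U * star U = 1 := hA.1.eigenvectorUnitary.2.2
  have hμ0 : ∀ i, 0 ≤ μ i := hA.eigenvalues_nonneg
  have hnμ : ∀ i, 0 < (n : ℝ) + μ i := fun i => by linarith [hμ0 i]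
  have hspec : Xᵀ * X = U * diagonal μ * star U := by
    simpa using hA.1.spectral_theorem
  -- step 1 : n•1 + XᵀX
  have h1 : (n : ℝ) • (1 : Matrix (Fin n) (Fin n) ℝ) + Xᵀ * X =
      U * diagonal (fun i => (n : ℝ) + μ i) * star U := by
    have hd : diagonal (fun i => (n : ℝ) + μ i) =
        (n : ℝ) • (1 : Matrix (Fin n) (Fin n) ℝ) + diagonal μ := by
      rw [smul_one_eq_diagonal, ← diagonal_add]
    rw [hd, mul_add, add_mul, aux_smul_one_conj U hUsU, ← hspec]
  -- step 2 : the inverse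
  have h2 : ((n : ℝ) • (1 : Matrix (Fin n) (Fin n) ℝ) + Xᵀ * X)⁻¹ =
      U * diagonal (fun i => ((n : ℝ) + μ i)⁻¹) * star U := by
    apply inv_eq_right_inv
    rw [h1, aux_conj_mul U _ _ hsUU, diagonal_mul_diagonal]
    have he : (fun i => ((n : ℝ) + μ i) * ((n : ℝ) + μ i)⁻¹) = fun _ => (1 : ℝ) := by
      funext i; exact mul_inv_cancel₀ (hnμ i).ne'
    rw [he, diagonal_one, mul_one, hUsU]
  -- step 3 : the square root
  set B : Matrix (Fin n) (Fin n) ℝ :=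
    U * diagonal (fun i => (Real.sqrt ((n : ℝ) + μ i))⁻¹) * star U with hBdef
  have hB : B.PosSemidef := by
    rw [hBdef, Matrix.star_eq_conjTranspose]
    exact (posSemidef_diagonal_iff.mpr fun i => by positivity).mul_mul_conjTranspose_same _
  have hB2 : B ^ 2 = ((n : ℝ) • (1 : Matrix (Fin n) (Fin n) ℝ) + Xᵀ * X)⁻¹ := by
    have hfun : (fun i => (Real.sqrt ((n : ℝ) + μ i))⁻¹ * (Real.sqrt ((n : ℝ) + μ i))⁻¹) =
        fun i => ((n : ℝ) + μ i)⁻¹ := by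
      funext i; rw [← mul_inv, Real.mul_self_sqrt (hnμ i).le]
    rw [pow_two, hBdef, aux_conj_mul U _ _ hsUU, diagonal_mul_diagonal, hfun, h2]
  have hsqrt : hS.sqrt = B := by
    have hSS : hS.sqrt = cfc Real.sqrt (((n : ℝ) • (1 : Matrix (Fin n) (Fin n) ℝ) + Xᵀ * X)⁻¹) := by
      rw [hS.1.cfc_eq]; rfl
    have hsq0 : hS.sqrt.PosSemidef := by
      unfold Matrix.PosSemidef.sqrt; rw [Matrix.star_eq_conjTranspose]
      exact (posSemidef_diagonal_iff.mpr fun i => by simp [Real.sqrt_nonneg]).mul_mul_conjTranspose_same _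
    open MatrixOrder in
    have hsq2 : hS.sqrt * hS.sqrt = ((n : ℝ) • (1 : Matrix (Fin n) (Fin n) ℝ) + Xᵀ * X)⁻¹ := by
      rw [hSS, ← cfc_mul ..]
      conv_rhs => rw [← cfc_id' ℝ (((n : ℝ) • (1 : Matrix (Fin n) (Fin n) ℝ) + Xᵀ * X)⁻¹) hS.1.isSelfAdjoint]
      apply cfc_congr
      intro x hx
      exact Real.mul_self_sqrt (spectrum_nonneg_of_nonneg hS.nonneg hx)
    open MatrixOrder in
    exact (CFC.mul_self_eq_mul_self_iff _ _ hsq0.nonneg hB.nonneg).mp (hsq2.trans (pow_two B ▸ hB2).symm)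
  -- step 4 : the full matrix
  set g : Fin n → ℝ := fun i =>
    (n : ℝ)⁻¹ + ((n : ℝ) + μ i)⁻¹ - (2 / Real.sqrt n) * (Real.sqrt ((n : ℝ) + μ i))⁻¹ with hgdef
  have h4 : (n : ℝ)⁻¹ • (1 : Matrix (Fin n) (Fin n) ℝ) +
      ((n : ℝ) • (1 : Matrix (Fin n) (Fin n) ℝ) + Xᵀ * X)⁻¹ -
      (2 / Real.sqrt n) • hS.sqrt = U * diagonal g * star U := by
    have hs1 : (n : ℝ)⁻¹ • (1 : Matrix (Fin n) (Fin n) ℝ) =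
        U * diagonal (fun _ => (n : ℝ)⁻¹) * star U := by
      rw [← smul_one_eq_diagonal, aux_smul_one_conj U hUsU]
    have hdg : diagonal g = diagonal (fun _ => (n : ℝ)⁻¹) +
        diagonal (fun i => ((n : ℝ) + μ i)⁻¹) -
        (2 / Real.sqrt n) • diagonal (fun i => (Real.sqrt ((n : ℝ) + μ i))⁻¹) := by
      rw [← diagonal_smul, diagonal_add, diagonal_sub]
      rfl
    rw [hsqrt, h2, hBdef, hs1, hdg]
    simp only [mul_add, add_mul, mul_sub, sub_mul, smul_mul_assoc, mul_smul_comm]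
  -- step 5 : the trace
  have h5 : Matrix.trace ((n : ℝ)⁻¹ • (1 : Matrix (Fin n) (Fin n) ℝ) +
      ((n : ℝ) • (1 : Matrix (Fin n) (Fin n) ℝ) + Xᵀ * X)⁻¹ -
      (2 / Real.sqrt n) • hS.sqrt) = ∑ i, g i := by
    rw [h4, trace_mul_cycle, hsUU, one_mul, trace_diagonal]
  rw [h5]
  -- Rayleigh bound for K
  have hray : (lmax • (1 : Matrix (Fin m) (Fin m) ℝ) - (n : ℝ)⁻¹ • (X * Xᵀ)).PosSemidef :=
    aux_sub_psd hK.1 lmax fun i => hlmax.2 ⟨i, rfl⟩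
  -- eigenvalue bound : each positive μ i is at most n * lmax
  have hμbound : ∀ i, 0 < μ i → μ i ≤ (n : ℝ) * lmax := by
    intro i hi
    set v : Fin n → ℝ := ⇑(hA.1.eigenvectorBasis i) with hvdef
    have hv : (Xᵀ * X) *ᵥ v = μ i • v := hA.1.mulVec_eigenvectorBasis i
    set w : Fin m → ℝ := X *ᵥ v with hwdef
    have hvv : v ⬝ᵥ v = 1 := by
      have hnorm := hA.1.eigenvectorBasis.orthonormal.1 i
      have hinner : (inner ℝ (hA.1.eigenvectorBasis i) (hA.1.eigenvectorBasis i) : ℝ) = 1 := by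
        rw [real_inner_self_eq_norm_sq, hnorm]; norm_num
      rw [EuclideanSpace.inner_eq_star_dotProduct] at hinner
      simpa using hinner
    have hww : w ⬝ᵥ w = μ i := by
      rw [hwdef, dotProduct_mulVec, ← mulVec_transpose, mulVec_mulVec, hv]
      simp [hvv]
    have hXXw : (X * Xᵀ) *ᵥ w = μ i • w := by
      rw [hwdef, mulVec_mulVec, Matrix.mul_assoc, ← mulVec_mulVec, hv, mulVec_smul]
    have hp := hray.dotProduct_mulVec_nonneg w
    simp only [star_trivial, sub_mulVec, dotProduct_sub, smul_mulVec, one_mulVec, hXXw,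
      dotProduct_smul, smul_dotProduct, smul_eq_mul, hww] at hp
    -- hp : 0 ≤ lmax * μ i - n⁻¹ * (μ i * ... )
    have hq : (n : ℝ)⁻¹ * (μ i * μ i) ≤ lmax * μ i := by
      have hww2 : w ⬝ᵥ w = μ i := hww
      nlinarith [hp]
    have hq2 : μ i * μ i ≤ (n : ℝ) * (lmax * μ i) := by
      have h3 := mul_le_mul_of_nonneg_left hq npos.le
      rw [← mul_assoc, mul_inv_cancel₀ npos.ne', one_mul] at h3
      linarith
    nlinarith [hq2, hi]
  -- each term with μ i = 0 vanishes
  have hg0 : ∀ i, μ i = 0 → g i = 0 := by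
    intro i h0
    have hss : Real.sqrt n * Real.sqrt n = (n : ℝ) := Real.mul_self_sqrt npos.le
    have hsn : Real.sqrt n ≠ 0 := by positivity
    rw [hgdef]
    simp only [h0, add_zero]
    field_simp
    nlinarith [hss]
  set t : ℝ := (1 - (Real.sqrt (1 + lmax))⁻¹) ^ 2 with htdef
  have ht0 : 0 ≤ t := sq_nonneg _
  -- each term with μ i > 0 is at most n⁻¹ * t
  have hgle : ∀ i, 0 < μ i → g i ≤ (n : ℝ)⁻¹ * t := by
    intro i hi
    have hμle : μ i ≤ (n : ℝ) * lmax := hμbound i hi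
    have hg_eq' : g i = ((Real.sqrt n)⁻¹ - (Real.sqrt ((n : ℝ) + μ i))⁻¹) ^ 2 := by
      have e1 : ((Real.sqrt n)⁻¹) ^ 2 = (n : ℝ)⁻¹ := by
        rw [← Real.sqrt_inv, Real.sq_sqrt (by positivity)]
      have e2 : ((Real.sqrt ((n : ℝ) + μ i))⁻¹) ^ 2 = ((n : ℝ) + μ i)⁻¹ := by
        rw [← Real.sqrt_inv, Real.sq_sqrt (inv_nonneg.mpr (hnμ i).le)]
      simp only [hgdef]
      rw [sub_sq, e1, e2]
      ring
    set a : ℝ := Real.sqrt n with hadef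
    set b : ℝ := Real.sqrt ((n : ℝ) + μ i) with hbdef
    set c : ℝ := Real.sqrt ((n : ℝ) * (1 + lmax)) with hcdef
    have ha : 0 < a := Real.sqrt_pos.mpr npos
    have hb : 0 < b := Real.sqrt_pos.mpr (hnμ i)
    have hc : 0 < c := Real.sqrt_pos.mpr (by nlinarith)
    have hab : a ≤ b := Real.sqrt_le_sqrt (by linarith [hμ0 i])
    have hbc : b ≤ c := Real.sqrt_le_sqrt (by nlinarith)
    have ha2 : a * a = (n : ℝ) := Real.mul_self_sqrt npos.le
    have hb2 : b * b = (n : ℝ) + μ i := Real.mul_self_sqrt (hnμ i).le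
    have hg_eq : g i = (a⁻¹ - b⁻¹) ^ 2 := hg_eq'
    have hkey : (a⁻¹ - b⁻¹) ^ 2 ≤ (a⁻¹ - c⁻¹) ^ 2 := by
      have hk1 : 0 ≤ a⁻¹ - b⁻¹ := by
        rw [sub_nonneg]
        exact inv_anti₀ ha hab
      have hk2 : a⁻¹ - b⁻¹ ≤ a⁻¹ - c⁻¹ := by
        have := inv_anti₀ hb hbc
        linarith
      exact pow_le_pow_left₀ hk1 hk2 2
    have hfinal : (a⁻¹ - c⁻¹) ^ 2 = (n : ℝ)⁻¹ * t := by
      have hcs : c = a * Real.sqrt (1 + lmax) := by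
        rw [hcdef, hadef, Real.sqrt_mul npos.le]
      have hsl : (0 : ℝ) < Real.sqrt (1 + lmax) := Real.sqrt_pos.mpr (by linarith)
      have hexp : a⁻¹ - (a * Real.sqrt (1 + lmax))⁻¹ =
          a⁻¹ * (1 - (Real.sqrt (1 + lmax))⁻¹) := by
        rw [mul_inv]; ring
      rw [hcs, hexp, mul_pow, htdef]
      congr 1
      rw [← ha2, mul_inv, sq]
    rw [hg_eq]
    calc (a⁻¹ - b⁻¹) ^ 2 ≤ (a⁻¹ - c⁻¹) ^ 2 := hkey
      _ = (n : ℝ)⁻¹ * t := hfinal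
  -- counting non-zero eigenvalues
  have hcard : (Finset.univ.filter fun i => μ i ≠ 0).card ≤ m := by
    have hrank : (Xᵀ * X).rank = Fintype.card {i // μ i ≠ 0} := hA.1.rank_eq_card_non_zero_eigs
    have hrle : (Xᵀ * X).rank ≤ m := by
      calc (Xᵀ * X).rank ≤ Xᵀ.rank := rank_mul_le_left _ _
        _ = X.rank := rank_transpose X
        _ ≤ m := rank_le_height X
    rw [Fintype.card_subtype] at hrank
    omega
  -- summing up
  have hsum : ∑ i, g i ≤ ∑ i, (if μ i ≠ 0 then (n : ℝ)⁻¹ * t else 0) := by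
    apply Finset.sum_le_sum
    intro i _
    by_cases h0 : μ i = 0
    · simp [h0, hg0 i h0]
    · simp only [h0, ne_eq, not_false_eq_true, if_true]
      exact hgle i (lt_of_le_of_ne (hμ0 i) (Ne.symm h0))
  have hsum2 : ∑ i, (if μ i ≠ 0 then (n : ℝ)⁻¹ * t else 0) =
      ((Finset.univ.filter fun i => μ i ≠ 0).card : ℝ) * ((n : ℝ)⁻¹ * t) := by
    rw [Finset.sum_ite, Finset.sum_const, Finset.sum_const_zero, add_zero, nsmul_eq_mul]
  calc ∑ i, g i ≤ ∑ i, (if μ i ≠ 0 then (n : ℝ)⁻¹ * t else 0) := hsum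
    _ = ((Finset.univ.filter fun i => μ i ≠ 0).card : ℝ) * ((n : ℝ)⁻¹ * t) := hsum2
    _ ≤ (m : ℝ) * ((n : ℝ)⁻¹ * t) := by
        apply mul_le_mul_of_nonneg_right _ (by positivity)
        exact_mod_cast hcard
    _ = ((m : ℝ) / n) * t := by rw [div_eq_mul_inv]; ring
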